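/- arXiv:2604.18818 — 6 statements merged into one kernel-verified Lean document; each statement's English description precedes it below -/
import Mathlib

section
/- Under the same hypotheses (μ0 C¹, μ0(0)=0, increasing, concave; α0, D, X0in > 0), the function ξ(X0) = D(X0in − α0·X0)/μ0(X0) is convex on (0, X0in/α0), i.e., ξ''(X0) ≥ 0 there (strictly positive if μ0'(X0)>0). -/
open Set

theorem xi_convexOn
    (μ0 : ℝ → ℝ) (α0 D X0in : ℝ)
    (hα0 : 0 < α0) (hD : 0 < D) (hX0in : 0 < X0in)
    (hC2 : ContDiff ℝ 2 μ0) (hμ00 : μ0 0 = 0)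
    (hμ0' : ∀ x ∈ Ici (0:ℝ), 0 < deriv μ0 x)
    (hμ0'' : ∀ x ∈ Ici (0:ℝ), deriv (deriv μ0) x ≤ 0) :
    ConvexOn ℝ (Ioo 0 (X0in / α0))
      (fun X0 : ℝ => D * (X0in - α0 * X0) / μ0 X0) ∧
    ∀ x ∈ Ioo (0:ℝ) (X0in / α0),
      0 < deriv μ0 x →
      0 < deriv (deriv (fun X0 : ℝ => D * (X0in - α0 * X0) / μ0 X0)) x := by
  have hdiff : Differentiable ℝ μ0 := hC2.differentiable two_ne_zero
  have hC1d : ContDiff ℝ 1 (deriv μ0) := by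
    have h2 : ContDiff ℝ ((1:ℕ)+1) μ0 := by exact_mod_cast hC2
    exact (contDiff_succ_iff_deriv.mp h2).2.2
  have hdiff' : Differentiable ℝ (deriv μ0) := hC1d.differentiable one_ne_zero
  have hcont : Continuous μ0 := hC2.continuous
  have hmono : StrictMonoOn μ0 (Ici 0) :=
    strictMonoOn_of_deriv_pos (convex_Ici 0) hcont.continuousOn
      (fun x hx => hμ0' x (by rw [interior_Ici] at hx; exact le_of_lt (mem_Ioi.mp hx)))
  have hpos : ∀ x : ℝ, 0 < x → 0 < μ0 x := fun x hx => by
    have := hmono (self_mem_Ici) (le_of_lt hx : (0:ℝ) ≤ x) hx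
    rwa [hμ00] at this
  set N : ℝ → ℝ := fun y => -(D*α0) * μ0 y - D*(X0in - α0*y) * deriv μ0 y with hNdef
  set g : ℝ → ℝ := fun y => N y / (μ0 y)^2 with hgdef
  have hμd : ∀ y : ℝ, HasDerivAt μ0 (deriv μ0 y) y := fun y => (hdiff y).hasDerivAt
  have hlin : ∀ y : ℝ, HasDerivAt (fun y => D*(X0in - α0*y)) (-(D*α0)) y := by
    intro y
    have := (((hasDerivAt_id y).const_mul α0).const_sub X0in).const_mul D
    simpa using this
  have hξd : ∀ y : ℝ, μ0 y ≠ 0 →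
      HasDerivAt (fun X0 : ℝ => D * (X0in - α0 * X0) / μ0 X0) (g y) y := by
    intro y hne
    have := (hlin y).div (hμd y) hne
    exact this
  have hderiveq : ∀ y : ℝ, μ0 y ≠ 0 →
      deriv (fun X0 : ℝ => D * (X0in - α0 * X0) / μ0 X0) y = g y :=
    fun y hne => (hξd y hne).deriv
  have hN : ∀ y : ℝ, HasDerivAt N (-(D*(X0in - α0*y)) * deriv (deriv μ0) y) y := by
    intro y
    have h2 := (hμd y).const_mul (-(D*α0))
    have h3 := (hlin y).mul ((hdiff' y).hasDerivAt)
    have h4 := h2.sub h3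
    exact h4.congr_deriv (by ring)
  have hgd : ∀ y : ℝ, μ0 y ≠ 0 → HasDerivAt g
      ((-(D*(X0in - α0*y)) * deriv (deriv μ0) y * (μ0 y)^2
        - N y * (2 * μ0 y ^ 1 * deriv μ0 y)) / ((μ0 y)^2)^2) y := by
    intro y hne
    exact (hN y).div ((hμd y).pow 2) (pow_ne_zero 2 hne)
  have hopen : IsOpen {y : ℝ | 0 < μ0 y} := isOpen_lt continuous_const hcont
  have hd2 : ∀ x ∈ Ioo (0:ℝ) (X0in / α0),
      0 < deriv (deriv (fun X0 : ℝ => D * (X0in - α0 * X0) / μ0 X0)) x := by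
    intro x hx
    have hxpos : 0 < μ0 x := hpos x hx.1
    have hxlt : α0 * x < X0in := by
      have := hx.2
      rwa [lt_div_iff₀ hα0, mul_comm] at this
    have heq : deriv (fun X0 : ℝ => D * (X0in - α0 * X0) / μ0 X0) =ᶠ[nhds x] g :=
      Filter.eventuallyEq_of_mem (hopen.mem_nhds hxpos)
        (fun y hy => hderiveq y (ne_of_gt hy))
    rw [Filter.EventuallyEq.deriv_eq heq, (hgd x (ne_of_gt hxpos)).deriv]
    have hμ'x : 0 < deriv μ0 x := hμ0' x (le_of_lt hx.1)
    have hμ''x : deriv (deriv μ0) x ≤ 0 := hμ0'' x (le_of_lt hx.1)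
    have hsub : 0 < X0in - α0 * x := by linarith
    have hNneg : N x < 0 := by
      simp only [hNdef]
      nlinarith [mul_pos (mul_pos hD hα0) hxpos, mul_pos (mul_pos hD hsub) hμ'x]
    have h1 : 0 ≤ -(D*(X0in - α0*x)) * deriv (deriv μ0) x * (μ0 x)^2 := by
      nlinarith [mul_nonneg (mul_nonneg (le_of_lt (mul_pos hD hsub))
        (neg_nonneg.mpr hμ''x)) (sq_nonneg (μ0 x))]
    have h2 : 0 < -(N x * (2 * μ0 x ^ 1 * deriv μ0 x)) := by
      have := mul_pos (mul_pos (neg_pos.mpr hNneg) hxpos) hμ'x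
      nlinarith
    have hnum : 0 < -(D*(X0in - α0*x)) * deriv (deriv μ0) x * (μ0 x)^2
        - N x * (2 * μ0 x ^ 1 * deriv μ0 x) := by linarith
    positivity
  constructor
  · have hconv : StrictConvexOn ℝ (Ioo 0 (X0in / α0))
        (fun X0 : ℝ => D * (X0in - α0 * X0) / μ0 X0) := by
      apply strictConvexOn_of_deriv2_pos (convex_Ioo _ _)
      · exact ContinuousOn.div (by fun_prop) hcont.continuousOn
          (fun y hy => ne_of_gt (hpos y hy.1))
      · intro x hx
        rw [interior_Ioo] at hx
        simpa [Function.iterate_succ, Function.comp] using hd2 x hx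
    exact hconv.convexOn
  · exact fun x hx _ => hd2 x hx
end

section
/- Let μ0 be C² with μ0(0)=0, μ0' > 0, μ0'' ≤ 0, and let ξ(X0) = D(X0in − α0 X0)/μ0(X0) on (0, X0in/α0), with α0, D, X0in, k0, k1, D1 > 0. The equation ξ'(X0) = −α0·D·k0/(k1·D1) admits a solution in (0, X0in/α0) if and only if k0·μ0(X0in/α0) > k1·D1; moreover, when ξ' is strictly increasing on this interval, the solution is unique. -/
open Set Filter

theorem xi_deriv_equation_solvability
    (μ0 : ℝ → ℝ) (α0 D X0in k0 k1 D1 : ℝ)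
    (hα0 : 0 < α0) (hD : 0 < D) (hX0in : 0 < X0in)
    (hk0 : 0 < k0) (hk1 : 0 < k1) (hD1 : 0 < D1)
    (hC2 : ContDiff ℝ 2 μ0) (hμ00 : μ0 0 = 0)
    (hμ0' : ∀ x ∈ Ici (0:ℝ), 0 < deriv μ0 x)
    (hμ0'' : ∀ x ∈ Ici (0:ℝ), deriv (deriv μ0) x ≤ 0)
    (ξ : ℝ → ℝ) (hξ : ∀ x, ξ x = D * (X0in - α0 * x) / μ0 x) :
    ((∃ x ∈ Ioo (0:ℝ) (X0in / α0),
        deriv ξ x = -(α0 * D * k0) / (k1 * D1)) ↔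
      k1 * D1 < k0 * μ0 (X0in / α0)) ∧
    (StrictMonoOn (deriv ξ) (Ioo (0:ℝ) (X0in / α0)) →
      ∀ x ∈ Ioo (0:ℝ) (X0in / α0), ∀ y ∈ Ioo (0:ℝ) (X0in / α0),
        deriv ξ x = -(α0 * D * k0) / (k1 * D1) →
        deriv ξ y = -(α0 * D * k0) / (k1 * D1) → x = y) := by
  set X : ℝ := X0in / α0 with hXdef
  have hX : 0 < X := div_pos hX0in hα0
  have hNX : X0in - α0 * X = 0 := by rw [hXdef]; field_simp; ring
  have hgdiff : Differentiable ℝ μ0 := hC2.differentiable (by norm_num)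
  have hgcont : Continuous μ0 := hgdiff.continuous
  have hg'cont : Continuous (deriv μ0) :=
    hC2.continuous_deriv (by norm_num)
  have hmono : StrictMonoOn μ0 (Ici 0) := by
    apply strictMonoOn_of_deriv_pos (convex_Ici 0) hgcont.continuousOn
    intro x hx
    rw [interior_Ici] at hx
    exact hμ0' x (mem_Ici.2 (le_of_lt hx))
  have hgpos : ∀ x : ℝ, 0 < x → 0 < μ0 x := by
    intro x hx
    have := hmono (self_mem_Ici) (le_of_lt hx) hx
    rwa [hμ00] at this
  -- the explicit derivative
  set φ : ℝ → ℝ := fun x =>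
    (-(α0 * D) * μ0 x - D * (X0in - α0 * x) * deriv μ0 x) / (μ0 x) ^ 2 with hφdef
  have hderiv : ∀ x : ℝ, 0 < x → HasDerivAt ξ (φ x) x := by
    intro x hx
    have hξE : ξ = fun x => D * (X0in - α0 * x) / μ0 x := funext hξ
    have hu : HasDerivAt (fun x : ℝ => D * (X0in - α0 * x)) (-(α0 * D)) x := by
      have h1 : HasDerivAt (fun x : ℝ => X0in - α0 * x) (0 - α0 * 1) x :=
        (hasDerivAt_const x X0in).sub ((hasDerivAt_id x).const_mul α0)
      have := h1.const_mul D
      exact this.congr_deriv (by ring)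
    have hv : HasDerivAt μ0 (deriv μ0 x) x := (hgdiff x).hasDerivAt
    have := hu.div hv (ne_of_gt (hgpos x hx))
    rw [hξE]
    exact this
  have hderiv_eq : ∀ x : ℝ, 0 < x → deriv ξ x = φ x := fun x hx => (hderiv x hx).deriv
  have hφX : φ X = -(α0 * D) / μ0 X := by
    have hgX := hgpos X hX
    rw [hφdef]
    simp only [hNX]
    field_simp
    ring
  -- derivative value strictly below the boundary value on the open interval
  have hlt : ∀ x ∈ Ioo (0:ℝ) X, φ x < -(α0 * D) / μ0 X := by
    intro x hx
    have hgx := hgpos x hx.1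
    have hgX := hgpos X hX
    have hg'x := hμ0' x (le_of_lt hx.1)
    have hN : 0 < X0in - α0 * x := by
      have : α0 * x < α0 * X := by exact (mul_lt_mul_iff_right₀ hα0).2 hx.2
      rw [hXdef] at this
      nlinarith
    have h1 : φ x < (-(α0 * D) * μ0 x) / (μ0 x) ^ 2 := by
      rw [hφdef]
      apply div_lt_div_of_pos_right _ (pow_pos hgx 2)
      nlinarith [mul_pos (mul_pos hD hN) hg'x]
    have h2 : (-(α0 * D) * μ0 x) / (μ0 x) ^ 2 = -(α0 * D) / μ0 x := by
      field_simp
    have h3 : -(α0 * D) / μ0 x < -(α0 * D) / μ0 X := by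
      have hgle : μ0 x < μ0 X := hmono (le_of_lt hx.1) (le_of_lt hX) hx.2
      have : (α0 * D) / μ0 X < (α0 * D) / μ0 x :=
        div_lt_div_of_pos_left (mul_pos hα0 hD) hgx hgle
      rw [neg_div, neg_div]
      linarith
    linarith [h1.trans_le (le_of_eq h2), h3]
  set c : ℝ := (α0 * D * k0) / (k1 * D1) with hcdef
  have hceq : -(α0 * D * k0) / (k1 * D1) = -c := by rw [hcdef, neg_div]
  constructor
  · constructor
    · -- forward direction
      rintro ⟨x, hx, hxeq⟩
      rw [hceq, hderiv_eq x hx.1] at hxeq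
      have := hlt x hx
      rw [hxeq] at this
      have h1 : α0 * D / μ0 X < c := by
        rw [neg_div] at this
        linarith
      rw [hcdef, div_lt_div_iff₀ (hgpos X hX) (mul_pos hk1 hD1)] at h1
      have hαD := mul_pos hα0 hD
      nlinarith
    · -- backward direction : IVT
      intro hcond
      have hgX := hgpos X hX
      have hcX : -c < -(α0 * D) / μ0 X := by
        rw [hcdef, neg_div, neg_lt_neg_iff, div_lt_div_iff₀ hgX (mul_pos hk1 hD1)]
        nlinarith [mul_pos hα0 hD]
      -- find x0 near 0 with φ x0 < -c
      have hnumcont : Continuous fun x : ℝ =>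
          -(α0 * D) * μ0 x - D * (X0in - α0 * x) * deriv μ0 x := by
        fun_prop
      have hnum0 : (-(α0 * D) * μ0 0 - D * (X0in - α0 * 0) * deriv μ0 0)
          = -(D * X0in * deriv μ0 0) := by
        rw [hμ00]; ring
      have hnumt : Tendsto (fun x : ℝ =>
          -(α0 * D) * μ0 x - D * (X0in - α0 * x) * deriv μ0 x)
          (nhdsWithin 0 (Ioi 0)) (nhds (-(D * X0in * deriv μ0 0))) := by
        rw [← hnum0]
        exact (hnumcont.tendsto 0).mono_left nhdsWithin_le_nhds
      have hsq : Tendsto (fun x : ℝ => (μ0 x) ^ 2) (nhdsWithin 0 (Ioi 0))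
          (nhdsWithin 0 (Ioi 0)) := by
        rw [tendsto_nhdsWithin_iff]
        constructor
        · have : Tendsto (fun x : ℝ => (μ0 x) ^ 2) (nhds 0) (nhds ((μ0 0)^2)) :=
            ((hgcont.pow 2).tendsto 0)
          rw [hμ00] at this
          simpa using this.mono_left nhdsWithin_le_nhds
        · filter_upwards [self_mem_nhdsWithin] with x hx
          exact pow_pos (hgpos x hx) 2
      have hinv : Tendsto (fun x : ℝ => ((μ0 x) ^ 2)⁻¹) (nhdsWithin 0 (Ioi 0)) atTop :=
        tendsto_inv_nhdsGT_zero.comp hsq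
      have hcneg : -(D * X0in * deriv μ0 0) < 0 := by
        have := hμ0' 0 self_mem_Ici
        nlinarith [mul_pos (mul_pos hD hX0in) this]
      have hφbot : Tendsto φ (nhdsWithin 0 (Ioi 0)) atBot := by
        have := hnumt.neg_mul_atTop hcneg hinv
        refine this.congr fun x => ?_
        simp only [hφdef]
        rw [div_eq_mul_inv]
      have hev1 : ∀ᶠ x in nhdsWithin 0 (Ioi 0), φ x < -c :=
        hφbot.eventually_lt_atBot _
      have hev2 : ∀ᶠ x in nhdsWithin (0:ℝ) (Ioi 0), x ∈ Ioo (0:ℝ) X := by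
        have : Ioo (0:ℝ) X ∈ nhdsWithin (0:ℝ) (Ioi 0) :=
          Ioo_mem_nhdsGT_of_mem (by constructor <;> simp [hX.le, hX])
        exact this
      obtain ⟨x0, hx0lt, hx0mem⟩ := (hev1.and hev2).exists
      -- continuity of φ on [x0, X]
      have hφcont : ContinuousOn φ (Icc x0 X) := by
        apply ContinuousOn.div
        · exact (hnumcont.continuousOn)
        · exact (hgcont.pow 2).continuousOn
        · intro x hx
          exact ne_of_gt (pow_pos (hgpos x (lt_of_lt_of_le hx0mem.1 hx.1)) 2)
      have hivt := intermediate_value_Icc (le_of_lt (hx0mem.2.trans_le le_rfl)) hφcont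
      have hmem : -c ∈ Icc (φ x0) (φ X) := by
        constructor
        · exact le_of_lt hx0lt
        · rw [hφX]; exact le_of_lt hcX
      obtain ⟨x, hxIcc, hxeq⟩ := hivt hmem
      have hxpos : 0 < x := lt_of_lt_of_le hx0mem.1 hxIcc.1
      have hxne : x ≠ X := by
        intro h
        rw [h, hφX] at hxeq
        exact absurd hxeq (ne_of_lt hcX).symm
      refine ⟨x, ⟨hxpos, lt_of_le_of_ne hxIcc.2 hxne⟩, ?_⟩
      rw [hceq, hderiv_eq x hxpos, hxeq]
  · -- uniqueness
    intro hsm x hx y hy hx' hy'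
    exact hsm.injOn hx hy (by rw [hx', hy'])
end

section
/- Let φ(X0) = ξ(X0) − δ(X0) on (0, X0in/α0), where ξ(X0) = D(X0in − α0 X0)/μ0(X0) and δ(X0) = (D/(k1·D1))·[(S1in − λ1) + k0·(X0in − α0·X0)], with all parameters positive and μ0 C¹, μ0(0)=0, increasing, concave. If k0·μ0(X0in/α0) ≤ k1·D1, then ξ'(X0) ≤ δ'(X0) = −α0·D·k0/(k1·D1) for all X0 in the interval, so φ is non-increasing. -/
open Set

theorem phi_antitone_of_slope_condition
    (μ0 : ℝ → ℝ) (α0 D X0in k0 k1 D1 S1in lam1 : ℝ)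
    (hα0 : 0 < α0) (hD : 0 < D) (hX0in : 0 < X0in)
    (hk0 : 0 < k0) (hk1 : 0 < k1) (hD1 : 0 < D1) (hlam1 : 0 < lam1)
    (hS1in : 0 ≤ S1in)
    (hC1 : ContDiff ℝ 1 μ0) (hμ00 : μ0 0 = 0)
    (hmono : StrictMonoOn μ0 (Ici 0))
    (hconc : ConcaveOn ℝ (Ici 0) μ0)
    (ξ δ : ℝ → ℝ)
    (hξ : ∀ x, ξ x = D * (X0in - α0 * x) / μ0 x)
    (hδ : ∀ x, δ x = D / (k1 * D1) * ((S1in - lam1) + k0 * (X0in - α0 * x)))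
    (hcond : k0 * μ0 (X0in / α0) ≤ k1 * D1) :
    (∀ x ∈ Ioo (0:ℝ) (X0in / α0),
      deriv ξ x ≤ -(α0 * D * k0) / (k1 * D1)) ∧
    AntitoneOn (fun x => ξ x - δ x) (Ioo (0:ℝ) (X0in / α0)) := by
  have hξfun : ξ = fun x => D * (X0in - α0 * x) / μ0 x := funext hξ
  have hδfun : δ = fun x => D / (k1 * D1) * ((S1in - lam1) + k0 * (X0in - α0 * x)) :=
    funext hδ
  have hdiff : Differentiable ℝ μ0 := hC1.differentiable one_ne_zero
  have hend : 0 < X0in / α0 := div_pos hX0in hα0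
  -- positivity of μ0 on positive reals
  have hμpos : ∀ x : ℝ, 0 < x → 0 < μ0 x := by
    intro x hx
    have := hmono (le_refl (0:ℝ)) (le_of_lt hx) hx
    rwa [hμ00] at this
  -- deriv μ0 nonneg at positive points
  have hderivμ : ∀ x : ℝ, 0 < x → 0 ≤ deriv μ0 x := by
    intro x hx
    have hslope : Filter.Tendsto (slope μ0 x) (nhdsWithin x (Ioi x)) (nhds (deriv μ0 x)) :=
      (hasDerivAt_iff_tendsto_slope.mp (hdiff x).hasDerivAt).mono_left
        (nhdsWithin_mono x (fun y hy => ne_of_gt hy))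
    refine ge_of_tendsto hslope ?_
    filter_upwards [self_mem_nhdsWithin] with y hy
    have hxy : x < y := hy
    have hμ : μ0 x < μ0 y := hmono (le_of_lt hx) (le_of_lt (hx.trans hxy)) hxy
    have : 0 < y - x := sub_pos.mpr hxy
    rw [slope_def_field]
    exact le_of_lt (div_pos (sub_pos.mpr hμ) this)
  -- derivative of ξ
  have hderξ : ∀ x ∈ Ioo (0:ℝ) (X0in / α0),
      HasDerivAt ξ ((-(D * α0) * μ0 x - D * (X0in - α0 * x) * deriv μ0 x) / (μ0 x)^2) x := by
    intro x hx
    have hμx : μ0 x ≠ 0 := ne_of_gt (hμpos x hx.1)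
    have hnum : HasDerivAt (fun x => D * (X0in - α0 * x)) (-(D * α0)) x := by
      have : HasDerivAt (fun x : ℝ => D * (X0in - α0 * x)) (D * (0 - α0 * 1)) x := by
        exact ((hasDerivAt_const x X0in).sub ((hasDerivAt_id x).const_mul α0)).const_mul D
      simpa using this
    have := hnum.div (hdiff x).hasDerivAt hμx
    rw [hξfun]
    exact this
  have hderδ : ∀ x : ℝ,
      HasDerivAt δ (-(α0 * D * k0) / (k1 * D1)) x := by
    intro x
    have : HasDerivAt (fun x : ℝ => D / (k1 * D1) * ((S1in - lam1) + k0 * (X0in - α0 * x)))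
        (D / (k1 * D1) * (0 + k0 * (0 - α0 * 1))) x := by
      exact (((hasDerivAt_const x (S1in - lam1)).add (((hasDerivAt_const x X0in).sub
        ((hasDerivAt_id x).const_mul α0)).const_mul k0)).const_mul (D / (k1 * D1)))
    rw [hδfun]
    convert this using 1
    field_simp
    ring
  have key : ∀ x ∈ Ioo (0:ℝ) (X0in / α0),
      deriv ξ x ≤ -(α0 * D * k0) / (k1 * D1) := by
    intro x hx
    have hμx := hμpos x hx.1
    have hμend := hμpos _ hend
    have hμle : μ0 x ≤ μ0 (X0in / α0) :=
      le_of_lt (hmono (le_of_lt hx.1) (le_of_lt hend) hx.2)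
    have hX : 0 < X0in - α0 * x := by
      have := (lt_div_iff₀ hα0).mp hx.2
      linarith
    rw [(hderξ x hx).deriv]
    have h1 : (-(D * α0) * μ0 x - D * (X0in - α0 * x) * deriv μ0 x) / (μ0 x)^2
        ≤ -(D * α0) / μ0 x := by
      rw [div_le_div_iff₀ (by positivity) hμx]
      have hd := hderivμ x hx.1
      nlinarith [mul_nonneg (mul_nonneg hD.le hX.le) hd, sq_nonneg (μ0 x)]
    refine h1.trans ?_
    rw [div_le_div_iff₀ hμx (by positivity)]
    nlinarith [mul_le_mul_of_nonneg_left hμle (by positivity : (0:ℝ) ≤ α0 * D * k0),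
      mul_le_mul_of_nonneg_left hcond (by positivity : (0:ℝ) ≤ α0 * D)]
  refine ⟨key, ?_⟩
  have hconv : Convex ℝ (Ioo (0:ℝ) (X0in / α0)) := convex_Ioo _ _
  refine antitoneOn_of_deriv_nonpos hconv ?_ ?_ ?_
  · intro x hx
    have hx' : x ∈ Ioo (0:ℝ) (X0in / α0) := hx
    exact (((hderξ x hx').differentiableAt.sub (hderδ x).differentiableAt)).continuousAt.continuousWithinAt
  · intro x hx
    rw [interior_Ioo] at hx
    exact ((hderξ x hx).differentiableAt.sub (hderδ x).differentiableAt).differentiableWithinAt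
  · intro x hx
    rw [interior_Ioo] at hx
    have hd : deriv (fun y => ξ y - δ y) x = deriv ξ x - deriv δ x :=
      deriv_sub (hderξ x hx).differentiableAt (hderδ x).differentiableAt
    rw [hd, (hderδ x).deriv]
    have := key x hx
    linarith
end

section
/- Under the hypotheses of the previous statement (case k0·μ0(X0in/α0) ≤ k1·D1), the equation ξ(X0) = δ(X0) has a solution in (0, X0in/α0) if and only if S1in > λ1, and in that case the solution is unique. -/
open Set

theorem equilibrium_existence_uniqueness_case1
    (μ0 : ℝ → ℝ) (α0 D X0in k0 k1 D1 S1in lam1 : ℝ)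
    (hα0 : 0 < α0) (hD : 0 < D) (hX0in : 0 < X0in)
    (hk0 : 0 < k0) (hk1 : 0 < k1) (hD1 : 0 < D1) (hlam1 : 0 < lam1)
    (hC1 : ContDiff ℝ 1 μ0) (hμ00 : μ0 0 = 0)
    (hmono : StrictMonoOn μ0 (Ici 0))
    (hconc : ConcaveOn ℝ (Ici 0) μ0)
    (ξ δ : ℝ → ℝ)
    (hξ : ∀ x, ξ x = D * (X0in - α0 * x) / μ0 x)
    (hδ : ∀ x, δ x = D / (k1 * D1) * ((S1in - lam1) + k0 * (X0in - α0 * x)))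
    (hcond : k0 * μ0 (X0in / α0) ≤ k1 * D1) :
    ((∃ x ∈ Ioo (0:ℝ) (X0in / α0), ξ x = δ x) ↔ lam1 < S1in) ∧
    (lam1 < S1in →
      ∃! x, x ∈ Ioo (0:ℝ) (X0in / α0) ∧ ξ x = δ x) := by
  set E := X0in / α0 with hE
  have hEpos : 0 < E := div_pos hX0in hα0
  have hXE : α0 * E = X0in := by rw [hE]; field_simp
  set g : ℝ → ℝ := fun x => k1 * D1 * (X0in - α0 * x) -
      ((S1in - lam1) + k0 * (X0in - α0 * x)) * μ0 x with hg
  have hμpos : ∀ x : ℝ, 0 < x → 0 < μ0 x := by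
    intro x hx
    have := hmono self_mem_Ici (le_of_lt hx) hx
    rwa [hμ00] at this
  have hμlt : ∀ x : ℝ, 0 ≤ x → x < E → k0 * μ0 x < k1 * D1 := by
    intro x hx hxE
    have h1 : μ0 x < μ0 E := hmono hx hEpos.le hxE
    calc k0 * μ0 x < k0 * μ0 E := by nlinarith
      _ ≤ k1 * D1 := hcond
  have hequiv : ∀ x ∈ Ioo (0:ℝ) E, (ξ x = δ x ↔ g x = 0) := by
    intro x hx
    have hμ := hμpos x hx.1
    have hk1D1 : (0:ℝ) < k1 * D1 := mul_pos hk1 hD1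
    rw [hξ, hδ]
    rw [div_eq_iff hμ.ne', div_mul_eq_mul_div, div_mul_eq_mul_div,
      eq_div_iff hk1D1.ne']
    simp only [hg]
    constructor
    · intro h
      have h' := mul_left_cancel₀ hD.ne'
        (show D * ((X0in - α0 * x) * (k1 * D1)) =
           D * (((S1in - lam1) + k0 * (X0in - α0 * x)) * μ0 x) by
          linear_combination h)
      linear_combination h'
    · intro h; linear_combination D * h
  have hg0 : g 0 = k1 * D1 * X0in := by simp [hg, hμ00]
  have hgE : g E = -(S1in - lam1) * μ0 E := by
    simp only [hg]
    rw [show X0in - α0 * E = 0 from by linarith [hXE]]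
    ring
  constructor
  · constructor
    · rintro ⟨x, hx, hxe⟩
      by_contra h
      push_neg at h
      have hgx : g x = 0 := (hequiv x hx).mp hxe
      have hμ := hμpos x hx.1
      have hlt := hμlt x hx.1.le hx.2
      have hpos : 0 < X0in - α0 * x := by nlinarith [hx.2]
      have hS : S1in - lam1 ≤ 0 := by linarith
      simp only [hg] at hgx
      nlinarith [mul_nonneg (neg_nonneg.mpr hS) hμ.le,
        mul_pos (sub_pos.mpr hlt) hpos]
    · intro hS
      -- existence via IVT
      have hμc : Continuous μ0 := hC1.continuous
      have hgc : Continuous g := by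
        apply Continuous.sub
        · fun_prop
        · exact Continuous.mul (by fun_prop) hμc
      have hμE : 0 < μ0 E := hμpos E hEpos
      have hgEneg : g E < 0 := by rw [hgE]; nlinarith
      have hg0pos : 0 < g 0 := by rw [hg0]; positivity
      have hsub := intermediate_value_Icc' hEpos.le hgc.continuousOn
      have h0mem : (0:ℝ) ∈ Icc (g E) (g 0) := ⟨hgEneg.le, hg0pos.le⟩
      obtain ⟨x, hxmem, hgx⟩ := hsub h0mem
      have hx1 : 0 < x := by
        rcases lt_or_eq_of_le hxmem.1 with h | h
        · exact h
        · exfalso; rw [← h] at hgx; rw [hgx] at hg0pos; exact lt_irrefl _ hg0pos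
      have hx2 : x < E := by
        rcases lt_or_eq_of_le hxmem.2 with h | h
        · exact h
        · exfalso; rw [h] at hgx; rw [hgx] at hgEneg; exact lt_irrefl _ hgEneg
      exact ⟨x, ⟨hx1, hx2⟩, (hequiv x ⟨hx1, hx2⟩).mpr hgx⟩
  · intro hS
    have hanti : StrictAntiOn g (Icc 0 E) := by
      intro a ha b hb hab
      have hμab := hmono ha.1 hb.1 hab
      have haE : a < E := lt_of_lt_of_le hab hb.2
      have h1 : k0 * μ0 a < k1 * D1 := hμlt a ha.1 haE
      have hbX : 0 ≤ X0in - α0 * b := by nlinarith [hb.2]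
      have h2 : 0 ≤ (S1in - lam1) + k0 * (X0in - α0 * b) := by nlinarith
      simp only [hg]
      nlinarith [mul_nonneg h2 (sub_pos.mpr hμab).le,
        mul_pos (mul_pos hα0 (sub_pos.mpr hab)) (sub_pos.mpr h1)]
    -- existence
    have hμc : Continuous μ0 := hC1.continuous
    have hgc : Continuous g := by
      apply Continuous.sub
      · fun_prop
      · exact Continuous.mul (by fun_prop) hμc
    have hμE : 0 < μ0 E := hμpos E hEpos
    have hgEneg : g E < 0 := by rw [hgE]; nlinarith
    have hg0pos : 0 < g 0 := by rw [hg0]; positivity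
    have hsub := intermediate_value_Icc' hEpos.le hgc.continuousOn
    obtain ⟨x, hxmem, hgx⟩ := hsub ⟨hgEneg.le, hg0pos.le⟩
    have hx1 : 0 < x := by
      rcases lt_or_eq_of_le hxmem.1 with h | h
      · exact h
      · exfalso; rw [← h] at hgx; rw [hgx] at hg0pos; exact lt_irrefl _ hg0pos
    have hx2 : x < E := by
      rcases lt_or_eq_of_le hxmem.2 with h | h
      · exact h
      · exfalso; rw [h] at hgx; rw [hgx] at hgEneg; exact lt_irrefl _ hgEneg
    refine ⟨x, ⟨⟨hx1, hx2⟩, (hequiv x ⟨hx1, hx2⟩).mpr hgx⟩, ?_⟩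
    rintro y ⟨hy, hye⟩
    have hgy : g y = 0 := (hequiv y hy).mp hye
    exact hanti.injOn (Ioo_subset_Icc_self hy) (Ioo_subset_Icc_self ⟨hx1, hx2⟩)
      (by rw [hgy, hgx])
end

section
/- With m11 = α0·D + μ0'(X0ᵏ)·X1ᵏ, m13 = μ0(X0ᵏ), m21 = k0·μ0'(X0ᵏ)·X1ᵏ, m32 = μ1'(λ1)·X1ᵏ, θ = k0·μ0(X0ᵏ) − k1·D1, and c3 = m32·(m21·m13 − θ·m11), if we set ξ'(X0ᵏ) := −m11/μ0(X0ᵏ), then c3 = −k1·D1·μ0(X0ᵏ)·m32·(ξ'(X0ᵏ) + α0·D·k0/(k1·D1)). In particular, c3 > 0 if and only if ξ'(X0ᵏ) < −α0·D·k0/(k1·D1). -/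
theorem c3_slope_identity
    (α0 D k0 k1 D1 μ0k μ0'k X1k μ1'lam : ℝ)
    (hα0 : 0 < α0) (hD : 0 < D) (hk0 : 0 < k0) (hk1 : 0 < k1) (hD1 : 0 < D1)
    (hμ0k : 0 < μ0k) (hμ0'k : 0 ≤ μ0'k) (hX1k : 0 < X1k) (hμ1' : 0 < μ1'lam)
    (m11 m13 m21 m32 θ ξ' c3 : ℝ)
    (hm11 : m11 = α0 * D + μ0'k * X1k)
    (hm13 : m13 = μ0k)
    (hm21 : m21 = k0 * μ0'k * X1k)
    (hm32 : m32 = μ1'lam * X1k)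
    (hθ : θ = k0 * μ0k - k1 * D1)
    (hc3 : c3 = m32 * (m21 * m13 - θ * m11))
    (hξ' : ξ' = -m11 / μ0k) :
    c3 = -(k1 * D1 * μ0k * m32) * (ξ' + α0 * D * k0 / (k1 * D1)) ∧
    (0 < c3 ↔ ξ' < -(α0 * D * k0) / (k1 * D1)) := by
  have hμ0ne : μ0k ≠ 0 := ne_of_gt hμ0k
  have hk1D1 : (0:ℝ) < k1 * D1 := mul_pos hk1 hD1
  have hk1D1ne : k1 * D1 ≠ 0 := ne_of_gt hk1D1
  have hid : c3 = -(k1 * D1 * μ0k * m32) * (ξ' + α0 * D * k0 / (k1 * D1)) := by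
    subst hm11 hm13 hm21 hm32 hθ hc3 hξ'
    field_simp
    ring
  refine ⟨hid, ?_⟩
  have hm32pos : 0 < m32 := hm32 ▸ mul_pos hμ1' hX1k
  have hcoef : 0 < k1 * D1 * μ0k * m32 := mul_pos (mul_pos hk1D1 hμ0k) hm32pos
  rw [hid]
  have hneg : -(α0 * D * k0) / (k1 * D1) = -(α0 * D * k0 / (k1 * D1)) := by ring
  rw [hneg, ← sub_neg]
  constructor
  · intro h
    nlinarith
  · intro h
    have hu : ξ' + α0 * D * k0 / (k1 * D1) < 0 := by linarith
    nlinarith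
end

section
/- Suppose S1in ≥ λ1(D1) and k0·μ0(X0in/α0) > k1·D1 (equivalently ξ'(X0in/α0) > −α0·D·k0/(k1·D1)). Then the equation ξ(X0) = δ(X0), with ξ(X0) = D(X0in − α0·X0)/μ0(X0) and δ(X0) = (D/(k1·D1))[(S1in − λ1(D1)) + k0·(X0in − α0·X0)], has exactly one solution in (0, X0in/α0). -/
open Set Filter Topology

theorem unique_equilibrium_case2
    (μ0 : ℝ → ℝ) (α0 D X0in k0 k1 D1 S1in lam1 : ℝ)
    (hα0 : 0 < α0) (hD : 0 < D) (hX0in : 0 < X0in)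
    (hk0 : 0 < k0) (hk1 : 0 < k1) (hD1 : 0 < D1) (hlam1 : 0 < lam1)
    (hC2 : ContDiff ℝ 2 μ0) (hμ00 : μ0 0 = 0)
    (hμ0' : ∀ x ∈ Ici (0:ℝ), 0 < deriv μ0 x)
    (hμ0'' : ∀ x ∈ Ici (0:ℝ), deriv (deriv μ0) x ≤ 0)
    (ξ δ : ℝ → ℝ)
    (hξ : ∀ x, ξ x = D * (X0in - α0 * x) / μ0 x)
    (hδ : ∀ x, δ x = D / (k1 * D1) * ((S1in - lam1) + k0 * (X0in - α0 * x)))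
    (hS1in : lam1 ≤ S1in)
    (hcond : k1 * D1 < k0 * μ0 (X0in / α0)) :
    ∃! x, x ∈ Ioo (0:ℝ) (X0in / α0) ∧ ξ x = δ x := by
  set b : ℝ := X0in / α0 with hb
  have hbpos : 0 < b := div_pos hX0in hα0
  have hαb : α0 * b = X0in := by rw [hb]; field_simp
  set c : ℝ := S1in - lam1 with hc
  have hcnn : 0 ≤ c := sub_nonneg.mpr hS1in
  set g : ℝ → ℝ := fun x => k1 * D1 * (X0in - α0 * x)
      - μ0 x * (c + k0 * (X0in - α0 * x)) with hgdef
  have hdiff : Differentiable ℝ μ0 := hC2.differentiable (by norm_num)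
  -- μ0 is positive on positive reals
  have hmono : StrictMonoOn μ0 (Ici 0) := by
    apply strictMonoOn_of_deriv_pos (convex_Ici 0) hdiff.continuous.continuousOn
    intro x hx
    rw [interior_Ici] at hx
    exact hμ0' x (mem_Ici.mpr (le_of_lt hx))
  have hμpos : ∀ x : ℝ, 0 < x → 0 < μ0 x := by
    intro x hx
    have := hmono self_mem_Ici (mem_Ici.mpr (le_of_lt hx)) hx
    rwa [hμ00] at this
  -- derivative of μ0 is differentiable
  have hdiff' : Differentiable ℝ (deriv μ0) := by
    have h2 : ContDiff ℝ ((1 : ℕ) + 1) μ0 := by exact_mod_cast hC2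
    have := (contDiff_succ_iff_deriv.mp h2).2.2
    exact this.differentiable (by norm_num)
  -- first derivative of g
  set G : ℝ → ℝ := fun x => -(k1 * D1 * α0)
      - deriv μ0 x * (c + k0 * (X0in - α0 * x)) + μ0 x * (k0 * α0) with hGdef
  have hu : ∀ x : ℝ, HasDerivAt (fun y => X0in - α0 * y) (-α0) x := by
    intro x
    simpa using ((hasDerivAt_id x).const_mul α0).const_sub X0in
  have hg' : ∀ x : ℝ, HasDerivAt g (G x) x := by
    intro x
    have h2 : HasDerivAt (fun y => k1 * D1 * (X0in - α0 * y)) (k1 * D1 * (-α0)) x :=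
      (hu x).const_mul _
    have h4 : HasDerivAt (fun y => c + k0 * (X0in - α0 * y)) (k0 * (-α0)) x :=
      ((hu x).const_mul k0).const_add c
    have h5 := ((hdiff x).hasDerivAt).mul h4
    have := h2.sub h5
    refine this.congr_deriv ?_
    simp only [hGdef]
    ring
  have hgdiff : Differentiable ℝ g := fun x => (hg' x).differentiableAt
  have hderivg : deriv g = G := funext fun x => (hg' x).deriv
  -- second derivative of g
  set G2 : ℝ → ℝ := fun x =>
      -(deriv (deriv μ0) x * (c + k0 * (X0in - α0 * x)) + deriv μ0 x * (k0 * (-α0)))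
      + deriv μ0 x * (k0 * α0) with hG2def
  have hG' : ∀ x : ℝ, HasDerivAt G (G2 x) x := by
    intro x
    have h4 : HasDerivAt (fun y => c + k0 * (X0in - α0 * y)) (k0 * (-α0)) x :=
      ((hu x).const_mul k0).const_add c
    have h6 := (((hdiff' x).hasDerivAt).mul h4).const_sub (-(k1 * D1 * α0))
    have h7 := ((hdiff x).hasDerivAt).mul_const (k0 * α0)
    have := h6.add h7
    exact this
  have hderivG : deriv G = G2 := funext fun x => (hG' x).deriv
  -- strict convexity of g on [0, b]
  have hconv : StrictConvexOn ℝ (Icc (0:ℝ) b) g := by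
    apply strictConvexOn_of_deriv2_pos (convex_Icc 0 b) hgdiff.continuous.continuousOn
    intro x hx
    rw [interior_Icc] at hx
    simp only [Function.iterate_succ_apply', Function.iterate_zero_apply, Function.iterate_one]
    rw [hderivg, hderivG, hG2def]
    have hx0 : (0:ℝ) ≤ x := le_of_lt hx.1
    have h1 : 0 < deriv μ0 x := hμ0' x hx0
    have h2 : deriv (deriv μ0) x ≤ 0 := hμ0'' x hx0
    have h3 : 0 < X0in - α0 * x := by nlinarith [hx.2, hαb]
    have h4 : 0 ≤ c + k0 * (X0in - α0 * x) := by positivity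
    show 0 < -(deriv (deriv μ0) x * (c + k0 * (X0in - α0 * x)) + deriv μ0 x * (k0 * -α0))
        + deriv μ0 x * (k0 * α0)
    have e1 : deriv (deriv μ0) x * (c + k0 * (X0in - α0 * x)) ≤ 0 :=
      mul_nonpos_of_nonpos_of_nonneg h2 h4
    have e2 : 0 < deriv μ0 x * (k0 * α0) := mul_pos h1 (mul_pos hk0 hα0)
    nlinarith
  -- g at the endpoints
  have hg0 : 0 < g 0 := by
    simp only [hgdef, hμ00, mul_zero, sub_zero, zero_mul]
    positivity
  have hgb : g b = -(μ0 b * c) := by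
    simp only [hgdef, hαb]
    ring_nf
  have hμb : 0 < μ0 b := hμpos b hbpos
  -- existence of y ∈ (0, b) with g y < 0
  have hy : ∃ y ∈ Ioo (0:ℝ) b, g y < 0 := by
    rcases eq_or_lt_of_le hcnn with hc0 | hc0
    · -- c = 0 : use that the derivative of g at b is positive
      have hgb0 : g b = 0 := by rw [hgb, ← hc0]; ring
      have hGb : 0 < G b := by
        simp only [hGdef, hαb, ← hc0]
        have : X0in - X0in = 0 := by ring
        rw [this]
        have : k1 * D1 < k0 * μ0 b := hcond
        nlinarith
      have hslope : Tendsto (slope g b) (𝓝[≠] b) (𝓝 (G b)) :=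
        hasDerivAt_iff_tendsto_slope.mp (hg' b)
      have hslope' : Tendsto (slope g b) (𝓝[<] b) (𝓝 (G b)) :=
        hslope.mono_left (nhdsWithin_mono b fun y hy => ne_of_lt hy)
      have h1 : ∀ᶠ y in 𝓝[<] b, 0 < slope g b y :=
        hslope'.eventually_const_lt hGb
      have h2 : ∀ᶠ y in 𝓝[<] b, y ∈ Ioo (0:ℝ) b :=
        eventually_of_mem (Ioo_mem_nhdsLT hbpos) fun y hy => hy
      rcases (h1.and h2).exists with ⟨y, hy1, hy2⟩
      refine ⟨y, hy2, ?_⟩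
      rw [slope_def_field] at hy1
      have hyb : y - b < 0 := sub_neg.mpr hy2.2
      by_contra h
      push_neg at h
      have : g y - g b ≥ 0 := by rw [hgb0]; linarith
      have := div_nonpos_of_nonneg_of_nonpos this (le_of_lt hyb)
      linarith
    · -- c > 0 : g b < 0, take y close to b
      have hgbneg : g b < 0 := by
        rw [hgb]
        nlinarith
      have h2 : ∀ᶠ y in 𝓝[<] b, y ∈ Ioo (0:ℝ) b :=
        eventually_of_mem (Ioo_mem_nhdsLT hbpos) fun y hy => hy
      have h1 : ∀ᶠ y in 𝓝[<] b, g y < 0 := by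
        have : Tendsto g (𝓝[<] b) (𝓝 (g b)) :=
          (hgdiff.continuous.tendsto b).mono_left nhdsWithin_le_nhds
        exact this.eventually_lt_const hgbneg
      rcases (h1.and h2).exists with ⟨y, hy1, hy2⟩
      exact ⟨y, hy2, hy1⟩
  -- existence of a root of g in (0, b)
  obtain ⟨y, hyI, hyneg⟩ := hy
  have hroot : ∃ x ∈ Ioo (0:ℝ) y, g x = 0 := by
    have hcont : ContinuousOn g (Icc 0 y) := hgdiff.continuous.continuousOn
    have : (0:ℝ) ∈ Ioo (g y) (g 0) := ⟨hyneg, hg0⟩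
    have := intermediate_value_Ioo' (le_of_lt hyI.1) hcont this
    rcases this with ⟨x, hx, hgx⟩
    exact ⟨x, hx, hgx⟩
  obtain ⟨x0, hx0I, hx0⟩ := hroot
  have hx0b : x0 ∈ Ioo (0:ℝ) b := ⟨hx0I.1, lt_trans hx0I.2 hyI.2⟩
  -- equivalence: for x ∈ (0,b), ξ x = δ x ↔ g x = 0
  have hequiv : ∀ x ∈ Ioo (0:ℝ) b, (ξ x = δ x ↔ g x = 0) := by
    intro x hx
    have hμ : μ0 x ≠ 0 := ne_of_gt (hμpos x hx.1)
    have hk1D1 : k1 * D1 ≠ 0 := by positivity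
    have hDne : D ≠ 0 := ne_of_gt hD
    have hfac : (0:ℝ) < D / (k1 * D1 * μ0 x) :=
      div_pos hD (mul_pos (mul_pos hk1 hD1) (hμpos x hx.1))
    have h1 : ξ x - δ x = D / (k1 * D1 * μ0 x) * g x := by
      rw [hξ, hδ]
      show D * (X0in - α0 * x) / μ0 x - D / (k1 * D1) * (c + k0 * (X0in - α0 * x))
          = D / (k1 * D1 * μ0 x) * (k1 * D1 * (X0in - α0 * x)
            - μ0 x * (c + k0 * (X0in - α0 * x)))
      field_simp
    constructor
    · intro h
      have h0 : D / (k1 * D1 * μ0 x) * g x = 0 := by rw [← h1, h]; ring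
      rcases mul_eq_zero.mp h0 with h3 | h3
      · exact absurd h3 (ne_of_gt hfac)
      · exact h3
    · intro h
      have h0 : ξ x - δ x = 0 := by rw [h1, h, mul_zero]
      linarith
  -- uniqueness from strict convexity
  refine ⟨x0, ⟨hx0b, (hequiv x0 hx0b).mpr hx0⟩, ?_⟩
  rintro x1 ⟨hx1b, hx1eq⟩
  have hx1 : g x1 = 0 := (hequiv x1 hx1b).mp hx1eq
  by_contra hne
  -- wlog: two distinct roots r < s in (0,b); then strict convexity at s between r and b
  have key : ∀ r s : ℝ, r ∈ Ioo (0:ℝ) b → s ∈ Ioo (0:ℝ) b → r < s → g r = 0 → g s = 0 → False := by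
    intro r s hr hs hrs hgr hgs
    have hsb : s < b := hs.2
    set t : ℝ := (s - r) / (b - r) with ht
    have hbr : 0 < b - r := by linarith [hr.2]
    have ht0 : 0 < t := div_pos (by linarith) hbr
    have ht1 : t < 1 := (div_lt_one hbr).mpr (by linarith)
    have ha0 : 0 < 1 - t := by linarith
    have hcomb : (1 - t) * r + t * b = s := by
      rw [ht]
      field_simp
      ring
    have hrI : r ∈ Icc (0:ℝ) b := ⟨le_of_lt hr.1, le_of_lt hr.2⟩
    have hbI : b ∈ Icc (0:ℝ) b := ⟨le_of_lt hbpos, le_refl b⟩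
    have hrb : r ≠ b := ne_of_lt hr.2
    have := hconv.2 hrI hbI hrb ha0 ht0 (by ring)
    simp only [smul_eq_mul] at this
    rw [hcomb, hgr, hgs] at this
    simp only [smul_eq_mul, mul_zero, zero_add] at this
    have hgble : g b ≤ 0 := by
      rw [hgb]
      have : 0 ≤ μ0 b * c := mul_nonneg (le_of_lt hμb) hcnn
      linarith
    nlinarith
  rcases lt_or_gt_of_ne hne with h | h
  · exact key x1 x0 hx1b hx0b h hx1 hx0
  · exact key x0 x1 hx0b hx1b h hx0 hx1
end
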